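/- Let k > 0. Suppose w : [0,1] → ℝ is twice continuously differentiable and ζ : [0,1] → ℝ is continuous, with w(0) = w(1) = 0, ζ(0) = ζ(1) = 0, and w''(z) − k² w(z) = k ζ(z) for all z ∈ [0,1]. Then for every z ∈ [0,1], |w(z)| ≤ c₁ k^{1/2} min(z, 1−z) (∫₀¹ ζ(s)² ds)^{1/2}, where c₁ := 3^{3/4}/2^{3/2}. -/

import Mathlib

open MeasureTheory Real intervalIntegral


-- aux 1: exp bound
lemma aux_exp_quad {t : ℝ} (ht : 0 ≤ t) : Real.exp t - 1 - t ≤ t^2/2 * Real.exp t := by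
  have key : ∀ s : ℝ, 0 ≤ s → 1 ≤ (1+s) * Real.exp (-s) + s^2/2 := by
    intro s hs
    set g : ℝ → ℝ := fun x => (1+x) * Real.exp (-x) + x^2/2 with hg
    have hd : ∀ x : ℝ, HasDerivAt g (x - x * Real.exp (-x)) x := by
      intro x
      have h1 : HasDerivAt (fun x : ℝ => Real.exp (-x)) (-Real.exp (-x)) x := by
        simpa using ((hasDerivAt_id x).neg).exp
      have h2 : HasDerivAt (fun x : ℝ => (1+x)) 1 x := by
        simpa using (hasDerivAt_id x).const_add 1
      have h3 := h2.mul h1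
      have h4 : HasDerivAt (fun x : ℝ => x^2/2) x x := by
        simpa using ((hasDerivAt_pow 2 x).div_const 2)
      have := h3.add h4
      refine this.congr_deriv ?_
      ring
    have hmono : MonotoneOn g (Set.Ici (0:ℝ)) := by
      apply monotoneOn_of_deriv_nonneg (convex_Ici 0)
      · exact (Continuous.continuousOn (by fun_prop))
      · exact fun x _ => (hd x).differentiableAt.differentiableWithinAt
      · intro x hx
        rw [(hd x).deriv]
        have hx0 : (0:ℝ) < x := by simpa using hx
        have : Real.exp (-x) ≤ 1 := Real.exp_le_one_iff.mpr (by linarith)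
        nlinarith
    have := hmono (Set.self_mem_Ici) (Set.mem_Ici.mpr hs) hs
    simpa [hg] using this
  have h := key t ht
  have hprod : Real.exp (-t) * Real.exp t = 1 := by
    rw [← Real.exp_add]; simp
  have h2 := mul_le_mul_of_nonneg_right h (Real.exp_pos t).le
  rw [one_mul, add_mul, mul_assoc, hprod, mul_one] at h2
  linarith



-- sinh x * cosh x - x ≤ sinh x ^ 2 for x ≥ 0
lemma aux_sinh_cosh {x : ℝ} (hx : 0 ≤ x) :
    Real.sinh x * Real.cosh x - x ≤ Real.sinh x ^ 2 := by
  rw [Real.sinh_eq, Real.cosh_eq]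
  have h1 : Real.exp (-(2*x)) * Real.exp (2*x) = 1 := by rw [← Real.exp_add]; simp
  have h2 : (-(2*x)) + 1 ≤ Real.exp (-(2*x)) := Real.add_one_le_exp _
  have h3 : Real.exp (-x) * Real.exp x = 1 := by rw [← Real.exp_add]; simp
  have h4 : Real.exp (-x) * Real.exp (-x) = Real.exp (-(2*x)) := by
    rw [← Real.exp_add]; ring_nf
  have h5 : Real.exp x * Real.exp x = Real.exp (2*x) := by
    rw [← Real.exp_add]; ring_nf
  nlinarith [Real.exp_pos x, Real.exp_pos (-x)]

-- the key hyperbolic inequality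
lemma aux_key {a b : ℝ} (ha : 0 ≤ a) (hb : 0 ≤ b) :
    Real.sinh b ^ 2 * ((Real.sinh a * Real.cosh a - a)/2)
      + Real.sinh a ^ 2 * ((Real.sinh b * Real.cosh b - b)/2)
      ≤ 1/2 * a^2 * Real.sinh (a+b) ^ 2 := by
  have hsa : 0 ≤ Real.sinh a := Real.sinh_nonneg_iff.mpr ha
  have hsb : 0 ≤ Real.sinh b := Real.sinh_nonneg_iff.mpr hb
  -- step 1: second term
  have h1 : Real.sinh b * Real.cosh b - b ≤ Real.sinh b ^ 2 := aux_sinh_cosh hb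
  -- step 2: combine with exp identity
  have hexp : Real.sinh a * Real.cosh a - a + Real.sinh a ^ 2
      = (Real.exp (2*a) - 1 - 2*a)/2 := by
    have h5 : Real.exp a * Real.exp a = Real.exp (2*a) := by rw [← Real.exp_add]; ring_nf
    have h6 : Real.exp (-a) * Real.exp a = 1 := by rw [← Real.exp_add]; simp
    rw [Real.sinh_eq, Real.cosh_eq]
    nlinarith
  have h2 : Real.exp (2*a) - 1 - 2*a ≤ (2*a)^2/2 * Real.exp (2*a) :=
    aux_exp_quad (by linarith)
  -- step 3: sinh(a+b) ≥ exp a * sinh b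
  have h3 : Real.exp a * Real.sinh b ≤ Real.sinh (a+b) := by
    rw [Real.sinh_add]
    have : Real.sinh b ≤ Real.cosh b := Real.sinh_lt_cosh b |>.le
    have hee : Real.exp a = Real.sinh a + Real.cosh a := by
      rw [Real.sinh_eq, Real.cosh_eq]; ring
    nlinarith [Real.cosh_pos b]
  have h4 : (Real.exp a * Real.sinh b)^2 ≤ Real.sinh (a+b) ^ 2 := by
    have h0 : 0 ≤ Real.exp a * Real.sinh b := by positivity
    nlinarith
  have h5 : Real.exp a * Real.exp a = Real.exp (2*a) := by rw [← Real.exp_add]; ring_nf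
  nlinarith [sq_nonneg (Real.sinh b), sq_nonneg (Real.sinh a), Real.exp_pos a,
    mul_nonneg (sq_nonneg (Real.sinh b)) (sq_nonneg a)]


-- Cauchy–Schwarz for interval integrals of continuous functions
lemma aux_cs (f g : ℝ → ℝ) (hf : Continuous f) (hg : Continuous g) {p q : ℝ} (hpq : p ≤ q) :
    |∫ s in p..q, f s * g s| ≤
      Real.sqrt (∫ s in p..q, (f s)^2) * Real.sqrt (∫ s in p..q, (g s)^2) := by
  set A := ∫ s in p..q, (f s)^2 with hA
  set B := ∫ s in p..q, f s * g s with hB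
  set C := ∫ s in p..q, (g s)^2 with hC
  have hA0 : 0 ≤ A := intervalIntegral.integral_nonneg hpq (fun x _ => sq_nonneg _)
  have hC0 : 0 ≤ C := intervalIntegral.integral_nonneg hpq (fun x _ => sq_nonneg _)
  have hquad : ∀ t : ℝ, 0 ≤ A * (t * t) + (2*B) * t + C := by
    intro t
    have hexp : ∀ s : ℝ, (t * f s + g s)^2 = t^2 * (f s)^2 + (2*t) * (f s * g s) + (g s)^2 := by
      intro s; ring
    have h1 : (∫ s in p..q, (t * f s + g s)^2)
        = t^2 * A + (2*t) * B + C := by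
      rw [hA, hB, hC]
      rw [← intervalIntegral.integral_const_mul, ← intervalIntegral.integral_const_mul,
        ← intervalIntegral.integral_add, ← intervalIntegral.integral_add]
      · exact intervalIntegral.integral_congr (fun s _ => hexp s)
      · exact ((continuous_const.mul (hf.pow 2)).add
          (continuous_const.mul (hf.mul hg))).intervalIntegrable p q
      · exact (hg.pow 2).intervalIntegrable p q
      · exact (continuous_const.mul (hf.pow 2)).intervalIntegrable p q
      · exact (continuous_const.mul (hf.mul hg)).intervalIntegrable p q
    have h2 : 0 ≤ ∫ s in p..q, (t * f s + g s)^2 :=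
      intervalIntegral.integral_nonneg hpq (fun x _ => sq_nonneg _)
    calc (0:ℝ) ≤ t^2 * A + (2*t) * B + C := h1 ▸ h2
    _ = A * (t*t) + (2*B)*t + C := by ring
  have hdisc := discrim_le_zero hquad
  rw [discrim] at hdisc
  have hBB : B^2 ≤ A * C := by nlinarith
  calc |B| = Real.sqrt (B^2) := (Real.sqrt_sq_eq_abs B).symm
  _ ≤ Real.sqrt (A * C) := Real.sqrt_le_sqrt hBB
  _ = Real.sqrt A * Real.sqrt C := Real.sqrt_mul hA0 C

-- integration by parts twice
lemma aux_ibp2 (p q : ℝ) (φ φ' φ'' f f' f'' : ℝ → ℝ)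
    (hφ : ∀ x, HasDerivAt φ (φ' x) x) (hφ' : ∀ x, HasDerivAt φ' (φ'' x) x)
    (hf : ∀ x, HasDerivAt f (f' x) x) (hf' : ∀ x, HasDerivAt f' (f'' x) x)
    (hφ''c : Continuous φ'') (hf''c : Continuous f'') :
    ∫ x in p..q, φ x * f'' x
      = φ q * f' q - φ p * f' p - (φ' q * f q - φ' p * f p) + ∫ x in p..q, φ'' x * f x := by
  have hφ'c : Continuous φ' := by
    rw [continuous_iff_continuousAt]; exact fun x => (hφ' x).continuousAt
  have hf'c : Continuous f' := by
    rw [continuous_iff_continuousAt]; exact fun x => (hf' x).continuousAt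
  have step1 : ∫ x in p..q, φ x * f'' x
      = φ q * f' q - φ p * f' p - ∫ x in p..q, φ' x * f' x :=
    intervalIntegral.integral_mul_deriv_eq_deriv_mul (fun x _ => hφ x) (fun x _ => hf' x)
      (hφ'c.intervalIntegrable p q) (hf''c.intervalIntegrable p q)
  have step2 : ∫ x in p..q, φ' x * f' x
      = φ' q * f q - φ' p * f p - ∫ x in p..q, φ'' x * f x :=
    intervalIntegral.integral_mul_deriv_eq_deriv_mul (fun x _ => hφ' x) (fun x _ => hf x)
      (hφ''c.intervalIntegrable p q) (hf'c.intervalIntegrable p q)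
  rw [step1, step2]; ring


-- antiderivative computations
lemma int_sinh_sq_left (k : ℝ) (hk : k ≠ 0) (z : ℝ) :
    ∫ s in (0:ℝ)..z, Real.sinh (k*s)^2
      = (Real.sinh (k*z) * Real.cosh (k*z) - k*z)/(2*k) := by
  have hder : ∀ x ∈ Set.uIcc (0:ℝ) z, HasDerivAt
      (fun s => (Real.sinh (k*s) * Real.cosh (k*s) - k*s)/(2*k))
      (Real.sinh (k*x)^2) x := by
    intro x _
    have hlin : HasDerivAt (fun s : ℝ => k*s) k x := by
      simpa using (hasDerivAt_id x).const_mul k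
    have hs : HasDerivAt (fun s : ℝ => Real.sinh (k*s)) (Real.cosh (k*x) * k) x :=
      (Real.hasDerivAt_sinh (k*x)).comp x hlin
    have hc : HasDerivAt (fun s : ℝ => Real.cosh (k*s)) (Real.sinh (k*x) * k) x :=
      (Real.hasDerivAt_cosh (k*x)).comp x hlin
    have := ((hs.mul hc).sub hlin).div_const (2*k)
    refine this.congr_deriv ?_
    have hcs : Real.cosh (k*x)^2 = Real.sinh (k*x)^2 + 1 := Real.cosh_sq (k*x)
    field_simp
    linear_combination hcs
  have hint : IntervalIntegrable (fun x => Real.sinh (k*x)^2) volume 0 z :=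
    (((Real.continuous_sinh.comp (continuous_const.mul continuous_id)).pow 2)).intervalIntegrable 0 z
  have := intervalIntegral.integral_eq_sub_of_hasDerivAt hder hint
  rw [this]
  simp

lemma int_sinh_sq_right (k : ℝ) (hk : k ≠ 0) (z : ℝ) :
    ∫ s in z..(1:ℝ), Real.sinh (k*(1-s))^2
      = (Real.sinh (k*(1-z)) * Real.cosh (k*(1-z)) - k*(1-z))/(2*k) := by
  have hder : ∀ x ∈ Set.uIcc z (1:ℝ), HasDerivAt
      (fun s => -((Real.sinh (k*(1-s)) * Real.cosh (k*(1-s)) - k*(1-s))/(2*k)))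
      (Real.sinh (k*(1-x))^2) x := by
    intro x _
    have hlin : HasDerivAt (fun s : ℝ => k*(1-s)) (-k) x := by
      have h : HasDerivAt (fun s : ℝ => k - k*s) (-k) x := by
        simpa using ((hasDerivAt_id x).const_mul k).const_sub k
      have he : (fun s : ℝ => k*(1-s)) = fun s : ℝ => k - k*s := by
        funext s; ring
      rw [he]; exact h
    have hs : HasDerivAt (fun s : ℝ => Real.sinh (k*(1-s))) (Real.cosh (k*(1-x)) * (-k)) x :=
      hlin.sinh
    have hc : HasDerivAt (fun s : ℝ => Real.cosh (k*(1-s))) (Real.sinh (k*(1-x)) * (-k)) x :=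
      hlin.cosh
    have := (((hs.mul hc).sub hlin).div_const (2*k)).neg
    refine this.congr_deriv ?_
    have hcs : Real.cosh (k*(1-x))^2 = Real.sinh (k*(1-x))^2 + 1 := Real.cosh_sq _
    field_simp
    linear_combination hcs
  have hint : IntervalIntegrable (fun x => Real.sinh (k*(1-x))^2) volume z 1 :=
    ((Real.continuous_sinh.comp (continuous_const.mul (continuous_const.sub continuous_id))).pow 2).intervalIntegrable z 1
  have := intervalIntegral.integral_eq_sub_of_hasDerivAt hder hint
  rw [this]
  simp

-- 2D Cauchy-Schwarz
lemma aux_two_cs {X Y p q : ℝ} (hp : 0 ≤ p) (hq : 0 ≤ q) :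
    X*p + Y*q ≤ Real.sqrt (X^2 + Y^2) * Real.sqrt (p^2 + q^2) := by
  have h1 : (X*p + Y*q)^2 ≤ (X^2+Y^2)*(p^2+q^2) := by nlinarith [sq_nonneg (X*q - Y*p)]
  calc X*p + Y*q ≤ |X*p+Y*q| := le_abs_self _
  _ = Real.sqrt ((X*p+Y*q)^2) := (Real.sqrt_sq_eq_abs _).symm
  _ ≤ Real.sqrt ((X^2+Y^2)*(p^2+q^2)) := Real.sqrt_le_sqrt h1
  _ = _ := Real.sqrt_mul (by positivity) _

-- constant comparison
lemma aux_const : 1/Real.sqrt 2 ≤ 3 ^ ((3:ℝ)/4) / 2 ^ ((3:ℝ)/2) := by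
  have h32 : (2:ℝ) ^ ((3:ℝ)/2) = 2 * Real.sqrt 2 := by
    rw [show (3:ℝ)/2 = 1 + 1/2 by norm_num, Real.rpow_add (by norm_num), Real.rpow_one,
      ← Real.sqrt_eq_rpow]
  have h34 : (2:ℝ) ≤ 3 ^ ((3:ℝ)/4) := by
    have h2 : (2:ℝ) = (16:ℝ) ^ ((1:ℝ)/4) := by
      rw [show (16:ℝ) = 2^(4:ℕ) by norm_num, ← Real.rpow_natCast 2 4,
        ← Real.rpow_mul (by norm_num)]
      norm_num
    have h3 : (3:ℝ) ^ ((3:ℝ)/4) = (27:ℝ) ^ ((1:ℝ)/4) := by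
      rw [show (27:ℝ) = 3^(3:ℕ) by norm_num, ← Real.rpow_natCast 3 3,
        ← Real.rpow_mul (by norm_num)]
      norm_num
    rw [h2, h3]
    exact Real.rpow_le_rpow (by norm_num) (by norm_num) (by norm_num)
  rw [h32]
  have hs2 : 0 < Real.sqrt 2 := Real.sqrt_pos.mpr (by norm_num)
  rw [div_le_div_iff₀ hs2 (by positivity)]
  calc 1 * (2 * Real.sqrt 2) = 2 * Real.sqrt 2 := by ring
  _ ≤ 3 ^ ((3:ℝ)/4) * Real.sqrt 2 := by nlinarith

/-- Pointwise velocity estimate (Lemma 3 of the paper, after Whitehead–Doering 2011):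
if `w'' - k²w = kζ` on `[0,1]` with `w(0) = w(1) = ζ(0) = ζ(1) = 0`, then for all
`z ∈ [0,1]`, `|w z| ≤ c₁ k^{1/2} min(z, 1-z) ‖ζ‖₂` with `c₁ = 3^{3/4}/2^{3/2}`. -/
theorem pointwise_velocity_estimate_stress_free
    (k : ℝ) (hk : 0 < k) (w ζ : ℝ → ℝ)
    (hw : ContDiff ℝ 2 w) (hζ : Continuous ζ)
    (hw0 : w 0 = 0) (hw1 : w 1 = 0) (hζ0 : ζ 0 = 0) (hζ1 : ζ 1 = 0)
    (hrel : ∀ z ∈ Set.Icc (0:ℝ) 1, iteratedDeriv 2 w z - k^2 * w z = k * ζ z) :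
    ∀ z ∈ Set.Icc (0:ℝ) 1,
      |w z| ≤ (3 ^ ((3:ℝ)/4) / 2 ^ ((3:ℝ)/2)) * k ^ ((1:ℝ)/2) * min z (1 - z) *
        (∫ s in (0:ℝ)..1, (ζ s)^2) ^ ((1:ℝ)/2) := by
  intro z hz
  obtain ⟨hz0, hz1⟩ := hz
  have h1z : (0:ℝ) ≤ 1 - z := by linarith
  have hk0 : k ≠ 0 := ne_of_gt hk
  have hsk : 0 < Real.sinh k := Real.sinh_pos_iff.mpr hk
  have hSb0 : 0 ≤ Real.sinh (k*(1-z)) := Real.sinh_nonneg_iff.mpr (by positivity)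
  have hSa0 : 0 ≤ Real.sinh (k*z) := Real.sinh_nonneg_iff.mpr (by positivity)
  -- continuity
  have hcu : Continuous (fun s : ℝ => Real.sinh (k*s)) := by fun_prop
  have hcv : Continuous (fun s : ℝ => Real.sinh (k*(1-s))) := by fun_prop
  -- smoothness of w
  have hw2 : ContDiff ℝ ((1:WithTop ℕ∞)+1) w := by
    convert hw using 2; norm_num
  obtain ⟨hwd, -, hw1'⟩ := contDiff_succ_iff_deriv.mp hw2
  have hw1'' : ContDiff ℝ ((0:WithTop ℕ∞)+1) (deriv w) := by
    simpa using hw1'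
  obtain ⟨hw'd, -, hw0'⟩ := contDiff_succ_iff_deriv.mp hw1''
  have hDc : Continuous (deriv (deriv w)) := by
    rw [contDiff_zero] at hw0'; exact hw0'
  have hwc : Continuous w := hwd.continuous
  have hiter : ∀ s, iteratedDeriv 2 w s = deriv (deriv w) s := by
    intro s
    rw [show (2:ℕ) = 1+1 from rfl, iteratedDeriv_succ, iteratedDeriv_one]
  -- derivative chains for sinh kernels
  have hlin : ∀ x : ℝ, HasDerivAt (fun s : ℝ => k*s) k x := fun x => by
    simpa using (hasDerivAt_id x).const_mul k
  have hlin2 : ∀ x : ℝ, HasDerivAt (fun s : ℝ => k*(1-s)) (-k) x := fun x => by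
    have h : HasDerivAt (fun s : ℝ => k - k*s) (-k) x := by
      simpa using ((hasDerivAt_id x).const_mul k).const_sub k
    have he : (fun s : ℝ => k*(1-s)) = fun s : ℝ => k - k*s := by funext s; ring
    rw [he]; exact h
  have hu : ∀ x : ℝ, HasDerivAt (fun s : ℝ => Real.sinh (k*s)) (k * Real.cosh (k*x)) x :=
    fun x => by simpa [mul_comm] using (hlin x).sinh
  have hu' : ∀ x : ℝ, HasDerivAt (fun x : ℝ => k * Real.cosh (k*x)) (k^2 * Real.sinh (k*x)) x :=
    fun x => by
      have := ((Real.hasDerivAt_cosh (k*x)).comp x (hlin x)).const_mul k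
      refine this.congr_deriv ?_; ring
  have hv : ∀ x : ℝ, HasDerivAt (fun s : ℝ => Real.sinh (k*(1-s)))
      (-(k * Real.cosh (k*(1-x)))) x := fun x => by
    have := (Real.hasDerivAt_sinh (k*(1-x))).comp x (hlin2 x)
    refine this.congr_deriv ?_; ring
  have hv' : ∀ x : ℝ, HasDerivAt (fun x : ℝ => -(k * Real.cosh (k*(1-x))))
      (k^2 * Real.sinh (k*(1-x))) x := fun x => by
    have := (((Real.hasDerivAt_cosh (k*(1-x))).comp x (hlin2 x)).const_mul k).neg
    refine this.congr_deriv ?_; ring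
  have hwD : ∀ x, HasDerivAt w (deriv w x) x := fun x => (hwd x).hasDerivAt
  have hwD' : ∀ x, HasDerivAt (deriv w) (deriv (deriv w) x) x := fun x => (hw'd x).hasDerivAt
  -- integration by parts
  have EL := aux_ibp2 0 z (fun s : ℝ => Real.sinh (k*s)) (fun x : ℝ => k * Real.cosh (k*x))
    (fun x : ℝ => k^2 * Real.sinh (k*x)) w (deriv w) (deriv (deriv w))
    hu hu' hwD hwD' (by fun_prop) hDc
  have ER := aux_ibp2 z 1 (fun s : ℝ => Real.sinh (k*(1-s)))
    (fun x : ℝ => -(k * Real.cosh (k*(1-x)))) (fun x : ℝ => k^2 * Real.sinh (k*(1-x)))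
    w (deriv w) (deriv (deriv w)) hv hv' hwD hwD' (by fun_prop) hDc
  -- membership helpers
  have hmemL : ∀ s ∈ Set.uIcc (0:ℝ) z, s ∈ Set.Icc (0:ℝ) 1 := by
    intro s hs; rw [Set.uIcc_of_le hz0] at hs; exact ⟨hs.1, hs.2.trans hz1⟩
  have hmemR : ∀ s ∈ Set.uIcc z (1:ℝ), s ∈ Set.Icc (0:ℝ) 1 := by
    intro s hs; rw [Set.uIcc_of_le hz1] at hs; exact ⟨hz0.trans hs.1, hs.2⟩
  -- rewrite using the ODE
  have hgenL : ∫ s in (0:ℝ)..z, Real.sinh (k*s) * (k * ζ s)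
      = (∫ s in (0:ℝ)..z, Real.sinh (k*s) * deriv (deriv w) s)
        - k^2 * ∫ s in (0:ℝ)..z, Real.sinh (k*s) * w s := by
    rw [← intervalIntegral.integral_const_mul,
      ← intervalIntegral.integral_sub (f := fun s => Real.sinh (k*s) * deriv (deriv w) s)
        (g := fun s => k^2 * (Real.sinh (k*s) * w s)) ((hcu.mul hDc).intervalIntegrable 0 z)
        ((continuous_const.mul (hcu.mul hwc)).intervalIntegrable 0 z)]
    apply intervalIntegral.integral_congr
    intro s hs
    have h := hrel s (hmemL s hs)
    rw [hiter s] at h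
    simp only
    linear_combination (-(Real.sinh (k*s))) * h
  have hgenR : ∫ s in z..(1:ℝ), Real.sinh (k*(1-s)) * (k * ζ s)
      = (∫ s in z..(1:ℝ), Real.sinh (k*(1-s)) * deriv (deriv w) s)
        - k^2 * ∫ s in z..(1:ℝ), Real.sinh (k*(1-s)) * w s := by
    rw [← intervalIntegral.integral_const_mul,
      ← intervalIntegral.integral_sub (f := fun s => Real.sinh (k*(1-s)) * deriv (deriv w) s)
        (g := fun s => k^2 * (Real.sinh (k*(1-s)) * w s)) ((hcv.mul hDc).intervalIntegrable z 1)
        ((continuous_const.mul (hcv.mul hwc)).intervalIntegrable z 1)]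
    apply intervalIntegral.integral_congr
    intro s hs
    have h := hrel s (hmemR s hs)
    rw [hiter s] at h
    simp only
    linear_combination (-(Real.sinh (k*(1-s)))) * h
  -- pull constants
  have hpullL : ∫ s in (0:ℝ)..z, Real.sinh (k*s) * (k * ζ s)
      = k * ∫ s in (0:ℝ)..z, Real.sinh (k*s) * ζ s := by
    rw [← intervalIntegral.integral_const_mul]
    apply intervalIntegral.integral_congr; intro s _; simp only; ring
  have hpullR : ∫ s in z..(1:ℝ), Real.sinh (k*(1-s)) * (k * ζ s)
      = k * ∫ s in z..(1:ℝ), Real.sinh (k*(1-s)) * ζ s := by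
    rw [← intervalIntegral.integral_const_mul]
    apply intervalIntegral.integral_congr; intro s _; simp only; ring
  have hassocL : ∫ s in (0:ℝ)..z, (k^2 * Real.sinh (k*s)) * w s
      = k^2 * ∫ s in (0:ℝ)..z, Real.sinh (k*s) * w s := by
    rw [← intervalIntegral.integral_const_mul]
    apply intervalIntegral.integral_congr; intro s _; simp only; ring
  have hassocR : ∫ s in z..(1:ℝ), (k^2 * Real.sinh (k*(1-s))) * w s
      = k^2 * ∫ s in z..(1:ℝ), Real.sinh (k*(1-s)) * w s := by
    rw [← intervalIntegral.integral_const_mul]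
    apply intervalIntegral.integral_congr; intro s _; simp only; ring
  -- the representations
  have repL : k * (∫ s in (0:ℝ)..z, Real.sinh (k*s) * ζ s)
      = Real.sinh (k*z) * deriv w z - k * Real.cosh (k*z) * w z := by
    rw [← hpullL, hgenL, EL, hassocL]
    simp [hw0]
  have repR : k * (∫ s in z..(1:ℝ), Real.sinh (k*(1-s)) * ζ s)
      = -(Real.sinh (k*(1-z)) * deriv w z) - k * Real.cosh (k*(1-z)) * w z := by
    rw [← hpullR, hgenR, ER, hassocR]
    simp [hw1]
  set A := ∫ s in (0:ℝ)..z, Real.sinh (k*s) * ζ s with hAdef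
  set B := ∫ s in z..(1:ℝ), Real.sinh (k*(1-s)) * ζ s with hBdef
  have hadd : Real.sinh (k*z) * Real.cosh (k*(1-z)) + Real.cosh (k*z) * Real.sinh (k*(1-z))
      = Real.sinh k := by
    rw [← Real.sinh_add]; ring_nf
  have hcomb : k * (Real.sinh k * w z) = k * (-(Real.sinh (k*(1-z)) * A + Real.sinh (k*z) * B)) := by
    linear_combination (Real.sinh (k*(1-z))) * repL + (Real.sinh (k*z)) * repR
      - (k * w z) * hadd
  have wform : w z = -(Real.sinh (k*(1-z)) * A + Real.sinh (k*z) * B) / Real.sinh k := by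
    have h2 := mul_left_cancel₀ hk0 hcomb
    field_simp
    linarith
  -- bound by absolute values
  have habs : |w z| ≤ (Real.sinh (k*(1-z)) * |A| + Real.sinh (k*z) * |B|) / Real.sinh k := by
    rw [wform, abs_div, abs_neg, abs_of_pos hsk]
    apply (div_le_div_iff_of_pos_right hsk).mpr
    calc |Real.sinh (k*(1-z)) * A + Real.sinh (k*z) * B|
        ≤ |Real.sinh (k*(1-z)) * A| + |Real.sinh (k*z) * B| := abs_add_le _ _
    _ = Real.sinh (k*(1-z)) * |A| + Real.sinh (k*z) * |B| := by
        rw [abs_mul, abs_mul, abs_of_nonneg hSb0, abs_of_nonneg hSa0]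
  -- Cauchy-Schwarz on both pieces
  have hintζL : (0:ℝ) ≤ ∫ s in (0:ℝ)..z, (ζ s)^2 :=
    intervalIntegral.integral_nonneg hz0 (fun _ _ => sq_nonneg _)
  have hintζR : (0:ℝ) ≤ ∫ s in z..(1:ℝ), (ζ s)^2 :=
    intervalIntegral.integral_nonneg hz1 (fun _ _ => sq_nonneg _)
  set P := Real.sqrt (∫ s in (0:ℝ)..z, (ζ s)^2) with hPdef
  set Q := Real.sqrt (∫ s in z..(1:ℝ), (ζ s)^2) with hQdef
  have hCSA := aux_cs (fun s => Real.sinh (k*s)) ζ hcu hζ hz0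
  have hCSB := aux_cs (fun s => Real.sinh (k*(1-s))) ζ hcv hζ hz1
  rw [int_sinh_sq_left k hk0 z] at hCSA
  rw [int_sinh_sq_right k hk0 z] at hCSB
  set Ju := (Real.sinh (k*z) * Real.cosh (k*z) - k*z)/(2*k) with hJudef
  set Jv := (Real.sinh (k*(1-z)) * Real.cosh (k*(1-z)) - k*(1-z))/(2*k) with hJvdef
  have hJu0 : 0 ≤ Ju := by
    rw [hJudef, ← int_sinh_sq_left k hk0 z]
    exact intervalIntegral.integral_nonneg hz0 (fun _ _ => sq_nonneg _)
  have hJv0 : 0 ≤ Jv := by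
    rw [hJvdef, ← int_sinh_sq_right k hk0 z]
    exact intervalIntegral.integral_nonneg hz1 (fun _ _ => sq_nonneg _)
  set Zint := ∫ s in (0:ℝ)..1, (ζ s)^2 with hZdef
  have hZ0 : (0:ℝ) ≤ Zint := by
    rw [hZdef]
    exact intervalIntegral.integral_nonneg (by norm_num) (fun _ _ => sq_nonneg _)
  -- two-dimensional Cauchy-Schwarz
  have hsq1 : (Real.sinh (k*(1-z)) * Real.sqrt Ju)^2 + (Real.sinh (k*z) * Real.sqrt Jv)^2
      = Real.sinh (k*(1-z))^2*Ju + Real.sinh (k*z)^2*Jv := by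
    rw [mul_pow, mul_pow, Real.sq_sqrt hJu0, Real.sq_sqrt hJv0]
  have hPQ : P^2 + Q^2 = Zint := by
    rw [hPdef, hQdef, Real.sq_sqrt hintζL, Real.sq_sqrt hintζR, hZdef]
    exact intervalIntegral.integral_add_adjacent_intervals
      ((hζ.pow 2).intervalIntegrable 0 z) ((hζ.pow 2).intervalIntegrable z 1)
  have step2 := aux_two_cs (X := Real.sinh (k*(1-z)) * Real.sqrt Ju)
    (Y := Real.sinh (k*z) * Real.sqrt Jv) (p := P) (q := Q)
    (Real.sqrt_nonneg _) (Real.sqrt_nonneg _)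
  rw [hsq1, hPQ] at step2
  have step3 : |w z| ≤ Real.sqrt (Real.sinh (k*(1-z))^2*Ju + Real.sinh (k*z)^2*Jv)
      * Real.sqrt Zint / Real.sinh k := by
    apply habs.trans
    apply (div_le_div_iff_of_pos_right hsk).mpr
    have h1 : Real.sinh (k*(1-z)) * |A| + Real.sinh (k*z) * |B|
        ≤ (Real.sinh (k*(1-z)) * Real.sqrt Ju) * P + (Real.sinh (k*z) * Real.sqrt Jv) * Q := by
      have e1 := mul_le_mul_of_nonneg_left hCSA hSb0
      have e2 := mul_le_mul_of_nonneg_left hCSB hSa0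
      calc Real.sinh (k*(1-z)) * |A| + Real.sinh (k*z) * |B|
          ≤ Real.sinh (k*(1-z)) * (Real.sqrt Ju * P) + Real.sinh (k*z) * (Real.sqrt Jv * Q) := by
            exact add_le_add e1 e2
      _ = (Real.sinh (k*(1-z)) * Real.sqrt Ju) * P + (Real.sinh (k*z) * Real.sqrt Jv) * Q := by
            ring
    exact h1.trans step2
  -- the key hyperbolic estimate
  set m := min z (1-z) with hmdef
  have hm0 : 0 ≤ m := le_min hz0 h1z
  have hkey : Real.sinh (k*(1-z))^2*Ju + Real.sinh (k*z)^2*Jv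
      ≤ (k*m)^2 * Real.sinh k^2/(2*k) := by
    rcases le_total z (1-z) with hle | hle
    · have hmin : m = z := min_eq_left hle
      have hk2 := aux_key (a := k*z) (b := k*(1-z)) (by positivity) (by positivity)
      rw [show k*z + k*(1-z) = k by ring] at hk2
      rw [hmin]
      calc Real.sinh (k*(1-z))^2*Ju + Real.sinh (k*z)^2*Jv
          = (Real.sinh (k*(1-z))^2*((Real.sinh (k*z)*Real.cosh (k*z) - k*z)/2)
            + Real.sinh (k*z)^2*((Real.sinh (k*(1-z))*Real.cosh (k*(1-z)) - k*(1-z))/2))/k := by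
            rw [hJudef, hJvdef]; field_simp; try ring
      _ ≤ (1/2*(k*z)^2*Real.sinh k^2)/k := (div_le_div_iff_of_pos_right hk).mpr hk2
      _ = (k*z)^2*Real.sinh k^2/(2*k) := by field_simp; try ring
    · have hmin : m = 1 - z := min_eq_right hle
      have hk2 := aux_key (a := k*(1-z)) (b := k*z) (by positivity) (by positivity)
      rw [show k*(1-z) + k*z = k by ring] at hk2
      rw [hmin]
      calc Real.sinh (k*(1-z))^2*Ju + Real.sinh (k*z)^2*Jv
          = (Real.sinh (k*z)^2*((Real.sinh (k*(1-z))*Real.cosh (k*(1-z)) - k*(1-z))/2)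
            + Real.sinh (k*(1-z))^2*((Real.sinh (k*z)*Real.cosh (k*z) - k*z)/2))/k := by
            rw [hJudef, hJvdef]; field_simp; try ring
      _ ≤ (1/2*(k*(1-z))^2*Real.sinh k^2)/k := (div_le_div_iff_of_pos_right hk).mpr hk2
      _ = (k*(1-z))^2*Real.sinh k^2/(2*k) := by field_simp; try ring
  -- simplify the square root
  have hsqrtkey : Real.sqrt (Real.sinh (k*(1-z))^2*Ju + Real.sinh (k*z)^2*Jv)
      ≤ k*m*Real.sinh k/Real.sqrt (2*k) := by
    have h1 := Real.sqrt_le_sqrt hkey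
    apply h1.trans_eq
    rw [Real.sqrt_div (by positivity) (2*k), ← mul_pow, Real.sqrt_sq (by positivity)]
  -- assemble
  have hfin : |w z| ≤ (k*m/Real.sqrt (2*k)) * Real.sqrt Zint := by
    apply step3.trans
    have h2 : Real.sqrt (Real.sinh (k*(1-z))^2*Ju + Real.sinh (k*z)^2*Jv) * Real.sqrt Zint
        ≤ (k*m*Real.sinh k/Real.sqrt (2*k)) * Real.sqrt Zint :=
      mul_le_mul_of_nonneg_right hsqrtkey (Real.sqrt_nonneg _)
    have h3 : (k*m*Real.sinh k/Real.sqrt (2*k)) * Real.sqrt Zint / Real.sinh k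
        = (k*m/Real.sqrt (2*k)) * Real.sqrt Zint := by
      field_simp
    exact (((div_le_div_iff_of_pos_right hsk).mpr h2).trans_eq h3)
  -- convert constants
  have hconv : k / Real.sqrt (2*k) = 1/Real.sqrt 2 * Real.sqrt k := by
    have hkk : Real.sqrt k * Real.sqrt k = k := Real.mul_self_sqrt hk.le
    have h2 : Real.sqrt k ≠ 0 := ne_of_gt (Real.sqrt_pos.mpr hk)
    have h3 : Real.sqrt 2 ≠ 0 := by positivity
    rw [Real.sqrt_mul (by norm_num : (0:ℝ) ≤ 2) k]
    field_simp
    have hkk2 : Real.sqrt k ^ 2 = k := by rw [sq]; exact hkk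
    linear_combination (-1) * hkk2
  rw [← Real.sqrt_eq_rpow, ← Real.sqrt_eq_rpow]
  have hrest : 0 ≤ Real.sqrt k * (m * Real.sqrt Zint) :=
    mul_nonneg (Real.sqrt_nonneg _) (mul_nonneg hm0 (Real.sqrt_nonneg _))
  calc |w z| ≤ (k*m/Real.sqrt (2*k)) * Real.sqrt Zint := hfin
  _ = (1/Real.sqrt 2) * (Real.sqrt k * (m * Real.sqrt Zint)) := by
      rw [show k*m/Real.sqrt (2*k) = (k/Real.sqrt (2*k))*m by ring, hconv]; ring
  _ ≤ (3 ^ ((3:ℝ)/4) / 2 ^ ((3:ℝ)/2)) * (Real.sqrt k * (m * Real.sqrt Zint)) :=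
      mul_le_mul_of_nonneg_right aux_const hrest
  _ = (3 ^ ((3:ℝ)/4) / 2 ^ ((3:ℝ)/2)) * Real.sqrt k * (m * Real.sqrt Zint) := by ring
  _ = (3 ^ ((3:ℝ)/4) / 2 ^ ((3:ℝ)/2)) * Real.sqrt k * m * Real.sqrt Zint := by ring
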